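/- Any sequence of PSSPM transitions starting from the initial configuration with n grains at position 0 reaches a fixed point in at most n² steps. -/

import Mathlib

/-- Initial configuration: `n` grains at position 0. -/
def initConf (n : ℕ) : ℤ → ℕ := fun i => if i = 0 then n else 0

/-- Move one grain from column `i` to column `j`. -/
def moveGrain (a : ℤ → ℕ) (i j : ℤ) : ℤ → ℕ :=
  fun k => if k = i then a k - 1 else if k = j then a k + 1 else a k

/-- One sequential SSPM step. -/
def sspmStep (a b : ℤ → ℕ) : Prop :=
  ∃ i : ℤ, (a (i + 1) + 2 ≤ a i ∧ b = moveGrain a i (i + 1)) ∨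
           (a (i - 1) + 2 ≤ a i ∧ b = moveGrain a i (i - 1))

/-- Left rule applicable at column `i`. -/
def appL (a : ℤ → ℕ) (i : ℤ) : Prop := a (i - 1) + 2 ≤ a i

/-- Right rule applicable at column `i`. -/
def appR (a : ℤ → ℕ) (i : ℤ) : Prop := a (i + 1) + 2 ≤ a i

/-- A choice function for a parallel step: `some false` = fire left,
`some true` = fire right, `none` = not fired.  Every column on which some
rule applies must fire. -/
def ValidChoice (a : ℤ → ℕ) (d : ℤ → Option Bool) : Prop :=
  ∀ i : ℤ, (d i = some false → appL a i) ∧ (d i = some true → appR a i) ∧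
    (d i = none → ¬ appL a i ∧ ¬ appR a i)

/-- The configuration resulting from firing all columns according to `d`. -/
def psspmResult (a : ℤ → ℕ) (d : ℤ → Option Bool) : ℤ → ℕ :=
  fun i => (a i - (if d i = none then 0 else 1))
    + (if d (i - 1) = some true then 1 else 0)
    + (if d (i + 1) = some false then 1 else 0)

/-- One parallel PSSPM step. -/
def psspmStep (a b : ℤ → ℕ) : Prop :=
  ∃ d : ℤ → Option Bool, ValidChoice a d ∧ b = psspmResult a d

/-- Reachability: reflexive transitive closure of a step relation. -/
def Reaches (step : (ℤ → ℕ) → (ℤ → ℕ) → Prop) : (ℤ → ℕ) → (ℤ → ℕ) → Prop :=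
  Relation.ReflTransGen step

/-- Fixed point: no rule applies anywhere. -/
def IsFixed (c : ℤ → ℕ) : Prop :=
  ∀ i : ℤ, c i ≤ c (i + 1) + 1 ∧ c i ≤ c (i - 1) + 1

/-- Unimodal configuration: nondecreasing up to some index, nonincreasing after. -/
def Unimodal (c : ℤ → ℕ) : Prop :=
  ∃ j : ℤ, (∀ i k : ℤ, i ≤ k → k ≤ j → c i ≤ c k) ∧
           (∀ i k : ℤ, j ≤ i → i ≤ k → c k ≤ c i)

/-- Strict lexicographic order, reading positions from left to right. -/
def lexLt (a b : ℤ → ℕ) : Prop :=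
  ∃ i : ℤ, a i < b i ∧ ∀ k : ℤ, k < i → a k = b k

/-- Lexicographic order. -/
def lexLe (a b : ℤ → ℕ) : Prop := a = b ∨ lexLt a b

/-- `closeStar a b` (a ◁* b): the nonzero entries of `a - b`, read from left
to right, form a concatenation of pairs (−1 then +1), recorded by an ordered
list of index pairs. -/
def closeStar (a b : ℤ → ℕ) : Prop :=
  ∃ l : List (ℤ × ℤ),
    (∀ p ∈ l, p.1 < p.2) ∧
    l.Chain' (fun p q => p.2 < q.1) ∧
    ∀ i : ℤ, (a i : ℤ) - (b i : ℤ) =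
      (if i ∈ l.map Prod.snd then 1 else 0) - (if i ∈ l.map Prod.fst then 1 else 0)

/-- `closeRel a b` (a ◁ b): `a - b` is exactly −1 at some index `i` and +1 at
some index `j > i`, and 0 elsewhere. -/
def closeRel (a b : ℤ → ℕ) : Prop :=
  ∃ i j : ℤ, i < j ∧ ((a i : ℤ) = (b i : ℤ) - 1) ∧ (a j = b j + 1) ∧
    ∀ k : ℤ, k ≠ i → k ≠ j → a k = b k

namespace PSSPM

def g (m : ℕ) : ℤ := (m : ℤ) * ((m : ℤ) + 1)
def eT (d : ℤ → Option Bool) (i : ℤ) : ℤ := if d i = some true then 1 else 0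
def eF (d : ℤ → Option Bool) (i : ℤ) : ℤ := if d i = some false then 1 else 0

lemma g_nonneg (m : ℕ) : 0 ≤ g m := by unfold g; positivity
lemma g_even (m : ℕ) : Even (g m) := Int.even_mul_succ_self (m : ℤ)

lemma even_sum (s : Finset ℤ) (f : ℤ → ℤ) (h : ∀ i ∈ s, Even (f i)) :
    Even (∑ i ∈ s, f i) := by
  classical
  induction s using Finset.induction_on with
  | empty => simp
  | insert x s hx ih =>
    rw [Finset.sum_insert hx]
    exact (h _ (Finset.mem_insert_self _ _)).add
      (ih fun i hi => h i (Finset.mem_insert_of_mem hi))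

lemma shift_sum (T k : ℤ) (hk : k = 1 ∨ k = -1) (G : ℤ → ℤ)
    (hs : ∀ i, G i ≠ 0 → -T ≤ i ∧ i ≤ T) :
    ∑ i ∈ Finset.Icc (-T-1) (T+1), G (i + k)
      = ∑ i ∈ Finset.Icc (-T-1) (T+1), G i := by
  have e1 : ∑ i ∈ Finset.Icc (-T-1) (T+1), G (i + k)
      = ∑ i ∈ Finset.Icc (-T-k) (T-k), G (i + k) := by
    refine (Finset.sum_subset ?_ ?_).symm
    · intro x hx; simp only [Finset.mem_Icc] at *; omega
    · intro x hx hx'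
      by_contra hne
      have := hs (x + k) hne
      simp only [Finset.mem_Icc] at hx hx'
      omega
  have e2 : ∑ i ∈ Finset.Icc (-T-1) (T+1), G i
      = ∑ i ∈ Finset.Icc (-T) T, G i := by
    refine (Finset.sum_subset ?_ ?_).symm
    · intro x hx; simp only [Finset.mem_Icc] at *; omega
    · intro x hx hx'
      by_contra hne
      have := hs x hne
      simp only [Finset.mem_Icc] at hx hx'
      omega
  rw [e1, e2]
  have e3 : Finset.Icc (-T) T = (Finset.Icc (-T-k) (T-k)).map (addRightEmbedding k) := by
    rw [Finset.map_add_right_Icc]; congr 1 <;> ring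
  rw [e3, Finset.sum_map]
  simp [addRightEmbedding]

lemma quad (e r s : ℤ) (he : e = 0 ∨ e = 1) (hr : r = 0 ∨ r = 1) (hs : s = 0 ∨ s = 1) :
    (-e + r + s) * (-e + r + s) + (-e + r + s) ≤ 3 * (r + s) := by
  rcases he with rfl | rfl <;> rcases hr with rfl | rfl <;> rcases hs with rfl | rfl <;> norm_num

lemma fire_two {a : ℤ → ℕ} {d : ℤ → Option Bool} (hd : ValidChoice a d)
    {i : ℤ} (hi : d i ≠ none) : 2 ≤ a i := by
  rcases hdi : d i with _ | (_ | _)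
  · exact absurd hdi hi
  · have := (hd i).1 hdi; unfold appL at this; omega
  · have := (hd i).2.1 hdi; unfold appR at this; omega

lemma energy_step (T : ℤ) (a : ℤ → ℕ) (d : ℤ → Option Bool) (hd : ValidChoice a d)
    (hsupp : ∀ i, a i ≠ 0 → -T ≤ i ∧ i ≤ T)
    (i0 : ℤ) (hi0 : d i0 ≠ none) :
    (∑ i ∈ Finset.Icc (-T-1) (T+1), g (psspmResult a d i)) + 2
      ≤ ∑ i ∈ Finset.Icc (-T-1) (T+1), g (a i) := by
  classical
  set S := Finset.Icc (-T-1) (T+1) with hS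
  set b := psspmResult a d with hb
  have hmem : ∀ i, d i ≠ none → -T ≤ i ∧ i ≤ T := fun i h =>
    hsupp i (by have := fire_two hd h; omega)
  -- the per-column delta
  set δ : ℤ → ℤ := fun i => -(eT d i + eF d i) + eT d (i-1) + eF d (i+1) with hδ
  have hcast : ∀ i, (b i : ℤ) = (a i : ℤ) + δ i := by
    intro i
    show (((a i - (if d i = none then 0 else 1))
        + (if d (i - 1) = some true then 1 else 0)
        + (if d (i + 1) = some false then 1 else 0) : ℕ) : ℤ)
      = (a i : ℤ) + (-(eT d i + eF d i) + eT d (i-1) + eF d (i+1))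
    unfold eT eF
    rcases hdi : d i with _ | (_ | _)
    · simp only [hdi]
      norm_num
      split_ifs <;> first | contradiction | (push_cast; ring)
    · have h2 : 2 ≤ a i := fire_two hd (by simp [hdi])
      simp only [hdi]
      norm_num
      split_ifs <;> first | contradiction | omega
    · have h2 : 2 ≤ a i := fire_two hd (by simp [hdi])
      simp only [hdi]
      norm_num
      split_ifs <;> first | contradiction | omega
  -- pointwise expansion
  have expand : ∑ i ∈ S, g (b i)
      = ∑ i ∈ S, g (a i) + ∑ i ∈ S, 2 * (δ i * (a i : ℤ))
        + ∑ i ∈ S, (δ i * δ i + δ i) := by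
    rw [← Finset.sum_add_distrib, ← Finset.sum_add_distrib]
    refine Finset.sum_congr rfl fun i _ => ?_
    show ((b i : ℤ)) * ((b i : ℤ) + 1) = _
    rw [hcast i]; unfold g; ring
  -- shift identities
  have heT01 : ∀ i, eT d i = 0 ∨ eT d i = 1 := by
    intro i; unfold eT; split_ifs <;> simp
  have heF01 : ∀ i, eF d i = 0 ∨ eF d i = 1 := by
    intro i; unfold eF; split_ifs <;> simp
  have heTne : ∀ i, eT d i ≠ 0 → d i ≠ none := by
    intro i h; unfold eT at h; intro hn; simp [hn] at h
  have heFne : ∀ i, eF d i ≠ 0 → d i ≠ none := by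
    intro i h; unfold eF at h; intro hn; simp [hn] at h
  have s1 : ∑ i ∈ S, eT d (i-1) * (a i : ℤ) = ∑ i ∈ S, eT d i * (a (i+1) : ℤ) := by
    have := shift_sum T (-1) (Or.inr rfl) (fun j => eT d j * (a (j+1) : ℤ))
      (fun j h => hmem j (heTne j (by intro h0; simp [h0] at h)))
    rw [← this]
    refine Finset.sum_congr rfl fun i _ => ?_
    show eT d (i - 1) * (a i : ℤ) = eT d (i + -1) * (a (i + -1 + 1) : ℤ)
    rw [show i + -1 = i - 1 by ring, show i - 1 + 1 = i by ring]
  have s2 : ∑ i ∈ S, eF d (i+1) * (a i : ℤ) = ∑ i ∈ S, eF d i * (a (i-1) : ℤ) := by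
    have := shift_sum T 1 (Or.inl rfl) (fun j => eF d j * (a (j-1) : ℤ))
      (fun j h => hmem j (heFne j (by intro h0; simp [h0] at h)))
    rw [← this]
    refine Finset.sum_congr rfl fun i _ => ?_
    show eF d (i + 1) * (a i : ℤ) = eF d (i + 1) * (a (i + 1 - 1) : ℤ)
    rw [show i + 1 - 1 = i by ring]
  have s3 : ∑ i ∈ S, eT d (i-1) = ∑ i ∈ S, eT d i := by
    have := shift_sum T (-1) (Or.inr rfl) (fun j => eT d j)
      (fun j h => hmem j (heTne j h))
    rw [← this]
    refine Finset.sum_congr rfl fun i _ => ?_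
    show eT d (i - 1) = eT d (i + -1)
    rw [show i + -1 = i - 1 by ring]
  have s4 : ∑ i ∈ S, eF d (i+1) = ∑ i ∈ S, eF d i := by
    have := shift_sum T 1 (Or.inl rfl) (fun j => eF d j)
      (fun j h => hmem j (heFne j h))
    rw [← this]
  set E : ℤ := ∑ i ∈ S, (eT d i + eF d i) with hE
  -- the linear term
  have lin : ∑ i ∈ S, δ i * (a i : ℤ) ≤ -2 * E := by
    have split1 : ∑ i ∈ S, δ i * (a i : ℤ)
        = ∑ i ∈ S, (eT d i * ((a (i+1) : ℤ) - (a i : ℤ))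
            + eF d i * ((a (i-1) : ℤ) - (a i : ℤ))) := by
      have l1 : ∑ i ∈ S, δ i * (a i : ℤ)
          = (∑ i ∈ S, eT d (i-1) * (a i : ℤ)) + (∑ i ∈ S, eF d (i+1) * (a i : ℤ))
            - ∑ i ∈ S, (eT d i + eF d i) * (a i : ℤ) := by
        rw [← Finset.sum_add_distrib, ← Finset.sum_sub_distrib]
        refine Finset.sum_congr rfl fun i _ => ?_
        simp only [hδ]; ring
      rw [l1, s1, s2, ← Finset.sum_add_distrib, ← Finset.sum_sub_distrib]
      refine Finset.sum_congr rfl fun i _ => ?_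
      ring
    rw [split1, hE, Finset.mul_sum]
    refine Finset.sum_le_sum fun i _ => ?_
    rcases hdi : d i with _ | (_ | _)
    · simp [eT, eF, hdi]
    · have := (hd i).1 hdi
      unfold appL at this
      have : (a (i-1) : ℤ) - (a i : ℤ) ≤ -2 := by omega
      simp only [eT, eF, hdi]
      norm_num
      linarith
    · have := (hd i).2.1 hdi
      unfold appR at this
      have : (a (i+1) : ℤ) - (a i : ℤ) ≤ -2 := by omega
      simp only [eT, eF, hdi]
      norm_num
      linarith
  -- the quadratic term
  have quadterm : ∑ i ∈ S, (δ i * δ i + δ i) ≤ 3 * E := by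
    have l1 : ∑ i ∈ S, (δ i * δ i + δ i) ≤ ∑ i ∈ S, 3 * (eT d (i-1) + eF d (i+1)) := by
      refine Finset.sum_le_sum fun i _ => ?_
      have he : eT d i + eF d i = 0 ∨ eT d i + eF d i = 1 := by
        rcases hdi : d i with _ | (_ | _) <;> simp [eT, eF, hdi]
      exact quad _ _ _ he (heT01 _) (heF01 _)
    calc ∑ i ∈ S, (δ i * δ i + δ i) ≤ _ := l1
      _ = 3 * ((∑ i ∈ S, eT d (i-1)) + ∑ i ∈ S, eF d (i+1)) := by
          rw [← Finset.sum_add_distrib, Finset.mul_sum]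
      _ = 3 * E := by rw [s3, s4, hE, Finset.sum_add_distrib]
  -- E ≥ 1
  have hE1 : 1 ≤ E := by
    have hi0S : i0 ∈ S := by
      have := hmem i0 hi0
      simp only [hS, Finset.mem_Icc]; omega
    have hval : (1:ℤ) ≤ eT d i0 + eF d i0 := by
      rcases hdi : d i0 with _ | (_ | _)
      · exact absurd hdi hi0
      · simp [eT, eF, hdi]
      · simp [eT, eF, hdi]
    calc (1:ℤ) ≤ eT d i0 + eF d i0 := hval
      _ ≤ E := Finset.single_le_sum (f := fun i => eT d i + eF d i)
          (fun i _ => by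
            show (0:ℤ) ≤ eT d i + eF d i
            rcases heT01 i with h|h <;> rcases heF01 i with h'|h' <;> omega) hi0S
  -- combine
  have main : ∑ i ∈ S, g (b i) + 1 ≤ ∑ i ∈ S, g (a i) := by
    rw [expand]
    have : ∑ i ∈ S, 2 * (δ i * (a i : ℤ)) = 2 * ∑ i ∈ S, δ i * (a i : ℤ) := by
      rw [Finset.mul_sum]
    rw [this]
    linarith
  have evA : Even (∑ i ∈ S, g (a i)) := even_sum _ _ fun i _ => g_even _
  have evB : Even (∑ i ∈ S, g (b i)) := even_sum _ _ fun i _ => g_even _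
  obtain ⟨x, hx⟩ := evA
  obtain ⟨y, hy⟩ := evB
  omega

end PSSPM

theorem psspm_reaches_fixed_point_in_n_squared (n : ℕ) (c : ℕ → ℤ → ℕ)
    (h0 : c 0 = initConf n)
    (hstep : ∀ t : ℕ, psspmStep (c t) (c (t + 1))) :
    IsFixed (c (n ^ 2)) := by
  classical
  by_contra hnf
  -- support bound
  have supp : ∀ t : ℕ, ∀ i : ℤ, c t i ≠ 0 → -(t:ℤ) ≤ i ∧ i ≤ (t:ℤ) := by
    intro t
    induction t with
    | zero =>
      intro i hi
      rw [h0] at hi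
      unfold initConf at hi
      by_cases h : i = 0
      · subst h; norm_num
      · simp [h] at hi
    | succ t ih =>
      intro i hi
      obtain ⟨d, hd, hb⟩ := hstep t
      rw [hb] at hi
      unfold psspmResult at hi
      by_cases h1 : d (i - 1) = some true
      · have := (hd (i-1)).2.1 h1
        unfold appR at this
        have h2 : c t (i - 1) ≠ 0 := by omega
        have := ih (i-1) h2
        push_cast
        omega
      · by_cases h2 : d (i + 1) = some false
        · have := (hd (i+1)).1 h2
          unfold appL at this
          rw [show i + 1 - 1 = i by ring] at this
          have h3 : c t (i + 1) ≠ 0 := by omega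
          have := ih (i+1) h3
          push_cast
          omega
        · simp only [h1, h2, if_false] at hi
          have h3 : c t i ≠ 0 := by
            intro h0'
            rw [h0'] at hi
            simp at hi
          have := ih i h3
          push_cast
          omega
  -- fixed points are absorbing
  have absorb : ∀ t : ℕ, IsFixed (c t) → ∀ s : ℕ, IsFixed (c (t + s)) := by
    intro t hfix s
    induction s with
    | zero => exact hfix
    | succ s ih =>
      obtain ⟨d, hd, hb⟩ := hstep (t + s)
      have hnone : ∀ i, d i = none := by
        intro i
        rcases hdi : d i with _ | (_ | _)
        · rfl
        · have h1 := (hd i).1 hdi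
          unfold appL at h1
          have h2 := (ih i).2
          omega
        · have h1 := (hd i).2.1 hdi
          unfold appR at h1
          have h2 := (ih i).1
          omega
      have hceq : c (t + s + 1) = c (t + s) := by
        rw [hb]
        funext i
        unfold psspmResult
        simp [hnone i, hnone (i-1), hnone (i+1)]
      show IsFixed (c (t + (s+1)))
      rw [show t + (s + 1) = t + s + 1 by ring, hceq]
      exact ih
  have notfix : ∀ t : ℕ, t ≤ n^2 → ¬ IsFixed (c t) := by
    intro t ht hfix
    have := absorb t hfix (n^2 - t)
    rw [show t + (n^2 - t) = n^2 by omega] at this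
    exact hnf this
  set T : ℤ := ((n^2 : ℕ) : ℤ) with hT
  set S : Finset ℤ := Finset.Icc (-T-1) (T+1) with hS
  -- each step before fixation decreases the energy by at least 2
  have key : ∀ t : ℕ, t < n^2 →
      (∑ i ∈ S, PSSPM.g (c (t+1) i)) + 2 ≤ ∑ i ∈ S, PSSPM.g (c t i) := by
    intro t ht
    obtain ⟨d, hd, hb⟩ := hstep t
    have hsupp : ∀ i, c t i ≠ 0 → -T ≤ i ∧ i ≤ T := by
      intro i hi
      have := supp t i hi
      have htT : (t : ℤ) ≤ T := by rw [hT]; exact_mod_cast Nat.le_of_lt ht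
      omega
    obtain ⟨i1, hi1⟩ : ∃ i, ¬ (c t i ≤ c t (i + 1) + 1 ∧ c t i ≤ c t (i - 1) + 1) := by
      by_contra hall
      push_neg at hall
      exact notfix t (Nat.le_of_lt ht) fun i => hall i
    have hfired : d i1 ≠ none := by
      intro hnone
      have h3 := (hd i1).2.2 hnone
      unfold appL appR at h3
      omega
    rw [hb]
    exact PSSPM.energy_step T (c t) d hd hsupp i1 hfired
  -- telescoping
  have tele : ∀ t : ℕ, t ≤ n^2 →
      (∑ i ∈ S, PSSPM.g (c t i)) + 2*(t:ℤ) ≤ ∑ i ∈ S, PSSPM.g (c 0 i) := by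
    intro t
    induction t with
    | zero => intro _; norm_num
    | succ t ih =>
      intro ht
      have h1 := ih (by omega)
      have h2 := key t (by omega)
      push_cast
      push_cast at h1
      linarith
  -- initial energy
  have init : ∑ i ∈ S, PSSPM.g (c 0 i) = (n:ℤ) * ((n:ℤ) + 1) := by
    rw [h0]
    have hval : ∀ i : ℤ, PSSPM.g (initConf n i)
        = if i = 0 then (n:ℤ) * ((n:ℤ)+1) else 0 := by
      intro i
      unfold initConf PSSPM.g
      split_ifs <;> norm_num
    rw [Finset.sum_congr rfl fun i _ => hval i]
    rw [Finset.sum_ite_eq' S 0 (fun _ => (n:ℤ) * ((n:ℤ)+1))]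
    have h0S : (0:ℤ) ∈ S := by
      rw [hS]; simp only [Finset.mem_Icc]
      have : (0:ℤ) ≤ T := by rw [hT]; positivity
      omega
    rw [if_pos h0S]
  -- final configuration is not fixed, so has a tall column
  have lower : (6:ℤ) ≤ ∑ i ∈ S, PSSPM.g (c (n^2) i) := by
    obtain ⟨i1, hi1⟩ : ∃ i, ¬ (c (n^2) i ≤ c (n^2) (i + 1) + 1 ∧
        c (n^2) i ≤ c (n^2) (i - 1) + 1) := by
      by_contra hall
      push_neg at hall
      exact notfix (n^2) le_rfl fun i => hall i
    have h2 : 2 ≤ c (n^2) i1 := by omega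
    have hiS : i1 ∈ S := by
      have := supp (n^2) i1 (by omega)
      rw [hS]; simp only [Finset.mem_Icc]
      rw [hT]
      omega
    have hterm : (6:ℤ) ≤ PSSPM.g (c (n^2) i1) := by
      unfold PSSPM.g
      have : (2:ℤ) ≤ (c (n^2) i1 : ℤ) := by exact_mod_cast h2
      nlinarith
    calc (6:ℤ) ≤ PSSPM.g (c (n^2) i1) := hterm
      _ ≤ ∑ i ∈ S, PSSPM.g (c (n^2) i) := by
          exact Finset.single_le_sum (fun i _ => PSSPM.g_nonneg _) hiS
  have final := tele (n^2) le_rfl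
  rw [init] at final
  have hn2 : ((n^2 : ℕ) : ℤ) = (n:ℤ)^2 := by push_cast; ring
  rw [hn2] at final
  have hnle : (n:ℤ) ≤ (n:ℤ)^2 := by
    have := Nat.le_self_pow (two_ne_zero) n
    exact_mod_cast this
  nlinarith [lower, final, hnle]
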